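/- Let ℓ, r be integers with 0 ≤ r ≤ ℓ. Then (ℓ − r) · S(ℓ, r) = Σ_{t=1}^{ℓ−r} (−1)^{t+1} · C(ℓ, t+1) · S(ℓ−t, r), where S denotes the Stirling number of the second kind and C the binomial coefficient. -/

import Mathlib

/-- Stirling numbers of the second kind: `stirling ℓ k` is the number of partitions of an
`ℓ`-element set into `k` nonempty blocks. -/
def stirling : ℕ → ℕ → ℕ
  | 0, 0 => 1
  | 0, _ + 1 => 0
  | _ + 1, 0 => 0
  | l + 1, k + 1 => (k + 1) * stirling l (k + 1) + stirling l k

lemma stirling_eq_zero : ∀ {n k : ℕ}, n < k → stirling n k = 0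
  | 0, k + 1, _ => rfl
  | n + 1, k + 1, h => by
    show (k + 1) * stirling n (k + 1) + stirling n k = 0
    rw [stirling_eq_zero (by omega), stirling_eq_zero (show n < k by omega)]
    ring

def F (n r : ℕ) : ℤ :=
  ∑ i ∈ Finset.range (r + 1), (-1) ^ (r - i) * (r.choose i : ℤ) * (i : ℤ) ^ n

lemma choose_aux (k i : ℕ) :
    (i : ℤ) * ((k + 1).choose i : ℤ) =
      (k + 1) * ((k + 1).choose i : ℤ) - (k + 1) * (k.choose i : ℤ) := by
  cases i with
  | zero => simp
  | succ j =>
    have h1 := Nat.add_one_mul_choose_eq k j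
    have h2 : ((k + 1).choose (j + 1) : ℤ) = k.choose j + k.choose (j + 1) := by
      exact_mod_cast congrArg (Nat.cast : ℕ → ℤ) (Nat.choose_succ_succ k j)
    zify at h1
    push_cast at h1 ⊢
    rw [h2] at h1 ⊢
    linear_combination -h1

lemma F_eq : ∀ (n r : ℕ), F n r = (r.factorial : ℤ) * stirling n r := by
  intro n
  induction n with
  | zero =>
    intro r
    have : F 0 r = ∑ i ∈ Finset.range (r + 1), (-1 : ℤ) ^ i * (r.choose i : ℤ) := by
      rw [F, ← Finset.sum_range_reflect]
      apply Finset.sum_congr rfl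
      intro i hi
      rw [Finset.mem_range] at hi
      rw [show r + 1 - 1 - i = r - i from by omega,
        show r - (r - i) = i from by omega,
        Nat.choose_symm (show i ≤ r by omega)]
      ring
    rw [this, Int.alternating_sum_range_choose]
    cases r with
    | zero => simp [stirling]
    | succ m => simp [stirling, stirling_eq_zero (Nat.succ_pos m)]
  | succ n ih =>
    intro r
    cases r with
    | zero => simp [F, stirling]
    | succ k =>
      have key : F (n + 1) (k + 1) = (k + 1) * F n (k + 1) + (k + 1) * F n k := by
        have step1 : F (n + 1) (k + 1) =
            (k + 1) * F n (k + 1) -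
              (k + 1) * ∑ i ∈ Finset.range (k + 2),
                (-1 : ℤ) ^ (k + 1 - i) * (k.choose i : ℤ) * (i : ℤ) ^ n := by
          rw [F, F, Finset.mul_sum, Finset.mul_sum, ← Finset.sum_sub_distrib]
          apply Finset.sum_congr rfl
          intro i _
          have hc := choose_aux k i
          push_cast at hc ⊢
          linear_combination ((-1 : ℤ) ^ (k + 1 - i) * (i : ℤ) ^ n) * hc
        have step2 : ∑ i ∈ Finset.range (k + 2),
            (-1 : ℤ) ^ (k + 1 - i) * (k.choose i : ℤ) * (i : ℤ) ^ n = - F n k := by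
          rw [Finset.sum_range_succ]
          simp only [Nat.choose_succ_self, Nat.cast_zero, mul_zero, zero_mul, add_zero]
          rw [F, ← Finset.sum_neg_distrib]
          apply Finset.sum_congr rfl
          intro i hi
          rw [Finset.mem_range] at hi
          rw [show k + 1 - i = (k - i) + 1 from by omega, pow_succ]
          ring
        rw [step1, step2]; ring
      rw [key, ih, ih]
      show _ = ((k+1).factorial : ℤ) * ((k + 1) * stirling n (k + 1) + stirling n k : ℕ)
      rw [Nat.factorial_succ]
      push_cast
      ring

lemma binom_desc (x : ℤ) (l : ℕ) :
    (x - 1) ^ l = ∑ t ∈ Finset.range (l + 1), (-1) ^ t * (l.choose t : ℤ) * x ^ (l - t) := by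
  have h := add_pow x (-1 : ℤ) l
  rw [show x + (-1 : ℤ) = x - 1 by ring] at h
  rw [h, ← Finset.sum_range_reflect]
  apply Finset.sum_congr rfl
  intro t ht
  rw [Finset.mem_range] at ht
  rw [show l + 1 - 1 - t = l - t from by omega,
    show l - (l - t) = t from by omega,
    Nat.choose_symm (show t ≤ l by omega)]
  ring

lemma G_lemma (x : ℤ) (l : ℕ) :
    ∑ t ∈ Finset.range (l + 1), (-1) ^ t * (l.choose (t + 1) : ℤ) * x ^ (l - t)
      = x ^ (l + 1) - x * (x - 1) ^ l := by
  rw [Finset.sum_range_succ]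
  simp only [Nat.choose_succ_self, Nat.cast_zero, mul_zero, zero_mul, add_zero]
  rw [binom_desc, Finset.sum_range_succ', mul_add, Finset.mul_sum]
  have e : ∀ k ∈ Finset.range l,
      x * ((-1 : ℤ) ^ (k + 1) * (l.choose (k + 1) : ℤ) * x ^ (l - (k + 1)))
        = -((-1 : ℤ) ^ k * (l.choose (k + 1) : ℤ) * x ^ (l - k)) := by
    intro k hk
    rw [Finset.mem_range] at hk
    rw [show l - k = (l - (k + 1)) + 1 from by omega, pow_succ, pow_succ]
    ring
  rw [Finset.sum_congr rfl e, Finset.sum_neg_distrib]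
  simp only [pow_zero, Nat.choose_zero_right, Nat.cast_one, mul_one, one_mul, Nat.sub_zero]
  ring

lemma sumB (l k : ℕ) :
    ∑ i ∈ Finset.range (k + 2),
        (-1 : ℤ) ^ (k + 1 - i) * ((k + 1).choose i : ℤ) * i * ((i : ℤ) - 1) ^ l
      = (k + 1) * F l k := by
  rw [Finset.sum_range_succ', F, Finset.mul_sum]
  have h0 : (-1 : ℤ) ^ (k + 1 - 0) * ((k + 1).choose 0 : ℤ) * ((0 : ℕ) : ℤ) * (((0 : ℕ) : ℤ) - 1) ^ l = 0 := by
    simp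
  rw [h0, add_zero]
  apply Finset.sum_congr rfl
  intro j hj
  rw [Finset.mem_range] at hj
  have h1 := Nat.add_one_mul_choose_eq k j
  zify at h1
  rw [show k + 1 - (j + 1) = k - j from by omega]
  push_cast at h1 ⊢
  linear_combination (-((-1 : ℤ) ^ (k - j)) * (j : ℤ) ^ l) * h1

lemma main_id (l r : ℕ) :
    ∑ t ∈ Finset.range (l + 1),
        (-1 : ℤ) ^ t * (l.choose (t + 1) : ℤ) * (stirling (l - t) r : ℤ)
      = (r : ℤ) * stirling l r := by
  cases r with
  | zero =>
    rw [Finset.sum_eq_zero, Nat.cast_zero, zero_mul]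
    intro t ht
    rw [Finset.mem_range] at ht
    rcases Nat.eq_or_lt_of_le (Nat.lt_succ_iff.mp ht) with he | hlt
    · rw [he, Nat.choose_succ_self]; simp
    · obtain ⟨m, hm⟩ : ∃ m, l - t = m + 1 := ⟨l - t - 1, by omega⟩
      rw [hm, show stirling (m + 1) 0 = 0 from rfl]; simp
  | succ k =>
    have hfac : (((k + 1).factorial : ℕ) : ℤ) ≠ 0 := by
      exact_mod_cast (k + 1).factorial_ne_zero
    apply mul_left_cancel₀ hfac
    rw [Finset.mul_sum]
    have c1 : ∀ t ∈ Finset.range (l + 1),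
        ((k + 1).factorial : ℤ) *
            ((-1 : ℤ) ^ t * (l.choose (t + 1) : ℤ) * (stirling (l - t) (k + 1) : ℤ))
          = ∑ i ∈ Finset.range (k + 2),
              (-1 : ℤ) ^ (k + 1 - i) * ((k + 1).choose i : ℤ) *
                ((-1 : ℤ) ^ t * (l.choose (t + 1) : ℤ) * (i : ℤ) ^ (l - t)) := by
      intro t _
      have := F_eq (l - t) (k + 1)
      rw [F] at this
      rw [show ((k + 1).factorial : ℤ) *
            ((-1 : ℤ) ^ t * (l.choose (t + 1) : ℤ) * (stirling (l - t) (k + 1) : ℤ))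
          = ((-1 : ℤ) ^ t * (l.choose (t + 1) : ℤ)) *
              (((k + 1).factorial : ℤ) * (stirling (l - t) (k + 1) : ℤ)) from by ring,
        ← this, Finset.mul_sum]
      apply Finset.sum_congr rfl
      intro i _
      ring
    rw [Finset.sum_congr rfl c1, Finset.sum_comm]
    have c2 : ∀ i ∈ Finset.range (k + 2),
        (∑ t ∈ Finset.range (l + 1),
            (-1 : ℤ) ^ (k + 1 - i) * ((k + 1).choose i : ℤ) *
              ((-1 : ℤ) ^ t * (l.choose (t + 1) : ℤ) * (i : ℤ) ^ (l - t)))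
          = (-1 : ℤ) ^ (k + 1 - i) * ((k + 1).choose i : ℤ) * (i : ℤ) ^ (l + 1)
              - (-1 : ℤ) ^ (k + 1 - i) * ((k + 1).choose i : ℤ) * (i : ℤ) * ((i : ℤ) - 1) ^ l := by
      intro i _
      rw [← Finset.mul_sum, G_lemma]
      ring
    rw [Finset.sum_congr rfl c2, Finset.sum_sub_distrib, sumB]
    have hF : ∑ x ∈ Finset.range (k + 2),
        (-1 : ℤ) ^ (k + 1 - x) * ((k + 1).choose x : ℤ) * (x : ℤ) ^ (l + 1) = F (l + 1) (k + 1) := rfl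
    rw [hF, F_eq, F_eq,
      show stirling (l + 1) (k + 1) = (k + 1) * stirling l (k + 1) + stirling l k from rfl,
      Nat.factorial_succ]
    push_cast
    ring

theorem stmt_3 (ℓ r : ℕ) (h : r ≤ ℓ) :
    ((ℓ - r : ℕ) : ℤ) * stirling ℓ r =
      ∑ t ∈ Finset.Icc 1 (ℓ - r),
        (-1 : ℤ) ^ (t + 1) * (Nat.choose ℓ (t + 1) : ℤ) * (stirling (ℓ - t) r : ℤ) := by
  have hm := main_id ℓ r
  rw [Finset.sum_range_succ'] at hm
  have hIcc : ∑ t ∈ Finset.Icc 1 (ℓ - r),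
        (-1 : ℤ) ^ (t + 1) * (ℓ.choose (t + 1) : ℤ) * (stirling (ℓ - t) r : ℤ)
      = ∑ i ∈ Finset.range (ℓ - r),
          -((-1 : ℤ) ^ (i + 1) * (ℓ.choose (i + 1 + 1) : ℤ) * (stirling (ℓ - (i + 1)) r : ℤ)) := by
    rw [← Finset.Ico_add_one_right_eq_Icc, Finset.sum_Ico_eq_sum_range, show ℓ - r + 1 - 1 = ℓ - r from by omega]
    apply Finset.sum_congr rfl
    intro i _
    rw [show 1 + i = i + 1 from by omega, pow_succ, pow_succ]
    ring
  have hext : ∑ i ∈ Finset.range (ℓ - r),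
        -((-1 : ℤ) ^ (i + 1) * (ℓ.choose (i + 1 + 1) : ℤ) * (stirling (ℓ - (i + 1)) r : ℤ))
      = ∑ i ∈ Finset.range ℓ,
          -((-1 : ℤ) ^ (i + 1) * (ℓ.choose (i + 1 + 1) : ℤ) * (stirling (ℓ - (i + 1)) r : ℤ)) := by
    apply Finset.sum_subset (Finset.range_subset_range.mpr (by omega))
    intro i hmem hi
    rw [Finset.mem_range] at hmem
    rw [Finset.mem_range, not_lt] at hi
    rw [stirling_eq_zero (show ℓ - (i + 1) < r from by omega)]
    simp
  rw [hIcc, hext, Finset.sum_neg_distrib]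
  have h0 : (-1 : ℤ) ^ 0 * (ℓ.choose (0 + 1) : ℤ) * (stirling (ℓ - 0) r : ℤ)
      = (ℓ : ℤ) * stirling ℓ r := by
    simp [Nat.choose_one_right]
  rw [h0] at hm
  have hcast : ((ℓ - r : ℕ) : ℤ) = (ℓ : ℤ) - r := by
    omega
  rw [hcast]
  linarith [hm]
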